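/- Let H be a complex Hilbert space and S a bounded operator on H. Then S is compact if and only if for every sequence (f_n) in H converging weakly to 0, one has ⟨S f_n, f_n⟩ → 0. -/

import Mathlib

open Filter
open scoped ComplexInnerProductSpace

open Metric Topology Set

section Aux

variable {H : Type*} [NormedAddCommGroup H] [InnerProductSpace ℂ H] [CompleteSpace H]

variable {H : Type*} [NormedAddCommGroup H] [InnerProductSpace ℂ H] [CompleteSpace H]

-- boundedness of weakly convergent sequences
lemma aux_bdd (f : ℕ → H)
    (hf : ∀ g : H, ∃ c : ℂ, Tendsto (fun n => ⟪f n, g⟫) atTop (𝓝 c)) :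
    ∃ M : ℝ, 0 ≤ M ∧ ∀ n, ‖f n‖ ≤ M := by
  obtain ⟨C, hC⟩ := banach_steinhaus (g := fun n => innerSL ℂ (f n)) (fun x => by
    obtain ⟨c, hc⟩ := hf x
    obtain ⟨B, hB⟩ := hc.norm.bddAbove_range
    exact ⟨B, fun i => hB (Set.mem_range_self i)⟩)
  refine ⟨max C 0, le_max_right _ _, fun n => ?_⟩
  calc ‖f n‖ = ‖innerSL ℂ (f n)‖ := (innerSL_apply_norm ℂ (f n)).symm
  _ ≤ C := hC n
  _ ≤ max C 0 := le_max_left _ _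

-- S fₙ → 0 in norm when S compact and fₙ weakly null
lemma aux_fwd (S : H →L[ℂ] H) (hS : IsCompactOperator ⇑S) (f : ℕ → H)
    {M : ℝ} (hM : ∀ n, ‖f n‖ ≤ M)
    (hw : ∀ g : H, Tendsto (fun n => ⟪f n, g⟫) atTop (𝓝 0)) :
    Tendsto (fun n => S (f n)) atTop (𝓝 0) := by
  obtain ⟨K, hK, hKmem⟩ := hS
  obtain ⟨r, hr, hball⟩ := Metric.mem_nhds_iff.mp hKmem
  -- the rescaled sequence lands in K
  have hM0 : (0:ℝ) < M + 1 := by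
    have := (norm_nonneg (f 0)).trans (hM 0); linarith
  set c : ℂ := ((r / (2 * (M + 1)) : ℝ) : ℂ) with hc
  have hcpos : (0:ℝ) < r / (2 * (M + 1)) := by positivity
  have hcne : c ≠ 0 := by
    simp only [hc, ne_eq, Complex.ofReal_eq_zero]
    exact ne_of_gt hcpos
  have hmem : ∀ n, S (c • f n) ∈ K := by
    intro n
    apply hball
    rw [Metric.mem_ball, dist_zero_right, norm_smul]
    have h1 : ‖c‖ = r / (2 * (M + 1)) := by
      rw [hc, Complex.norm_real, Real.norm_of_nonneg hcpos.le]
    rw [h1]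
    calc r / (2 * (M + 1)) * ‖f n‖ ≤ r / (2 * (M + 1)) * (M + 1) := by
          apply mul_le_mul_of_nonneg_left _ hcpos.le
          exact (hM n).trans (by linarith)
    _ = r / 2 := by field_simp
    _ < r := by linarith
  -- weak nullity of S (c • f n)
  have hwS : ∀ g : H, Tendsto (fun n => ⟪S (c • f n), g⟫) atTop (𝓝 0) := by
    intro g
    have h1 : ∀ n, ⟪S (c • f n), g⟫ = (starRingEnd ℂ) c * ⟪f n, S.adjoint g⟫ := by
      intro n
      rw [← ContinuousLinearMap.adjoint_inner_right, inner_smul_left]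
    simp only [h1]
    simpa using ((hw (S.adjoint g)).const_mul ((starRingEnd ℂ) c))
  -- convergence of rescaled sequence via subsequences
  have hKseq : Tendsto (fun n => S (c • f n)) atTop (𝓝 0) := by
    apply tendsto_of_subseq_tendsto
    intro ns hns
    obtain ⟨a, haK, ms, hms, hlim⟩ := hK.tendsto_subseq (fun k => hmem (ns k))
    refine ⟨ms, ?_⟩
    have ha : a = 0 := by
      have h0 : ∀ g : H, ⟪a, g⟫ = 0 := by
        intro g
        have h1 : Tendsto (fun k => ⟪S (c • f (ns (ms k))), g⟫) atTop (𝓝 ⟪a, g⟫) :=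
          hlim.inner tendsto_const_nhds
        exact tendsto_nhds_unique h1 ((hwS g).comp (hns.comp hms.tendsto_atTop))
      have := h0 a
      rwa [inner_self_eq_zero] at this
    rw [ha] at hlim
    exact hlim
  have : Tendsto (fun n => c⁻¹ • S (c • f n)) atTop (𝓝 (c⁻¹ • (0:H))) :=
    hKseq.const_smul c⁻¹
  simpa [smul_smul, inv_mul_cancel₀ hcne] using this

-- polarization: the diagonal hypothesis gives ‖S fₙ‖ → 0 for weakly null fₙ
lemma aux_pol (S : H →L[ℂ] H)
    (hyp : ∀ f : ℕ → H, (∀ g : H, Tendsto (fun n => ⟪f n, g⟫) atTop (𝓝 0)) →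
      Tendsto (fun n => ⟪S (f n), f n⟫) atTop (𝓝 0))
    (f : ℕ → H) (hw : ∀ g : H, Tendsto (fun n => ⟪f n, g⟫) atTop (𝓝 0)) :
    Tendsto (fun n => S (f n)) atTop (𝓝 0) := by
  have hwS : ∀ g : H, Tendsto (fun n => ⟪S (f n), g⟫) atTop (𝓝 0) := by
    intro g
    have h1 : ∀ n, ⟪S (f n), g⟫ = ⟪f n, S.adjoint g⟫ := fun n =>
      (ContinuousLinearMap.adjoint_inner_right S (f n) g).symm
    simp only [h1]
    exact hw (S.adjoint g)
  -- for each ε, the sequence fₙ + ε • S fₙ is weakly null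
  have hcomb : ∀ ε : ℂ, Tendsto
      (fun n => ⟪S (f n + ε • S (f n)), f n + ε • S (f n)⟫) atTop (𝓝 0) := by
    intro ε
    apply hyp
    intro g
    have : Tendsto (fun n => ⟪f n, g⟫ + (starRingEnd ℂ) ε * ⟪S (f n), g⟫) atTop (𝓝 0) := by
      simpa using (hw g).add ((hwS g).const_mul ((starRingEnd ℂ) ε))
    convert this using 2 with n
    rw [inner_add_left, inner_smul_left]
  -- polarization identity
  have hpol : ∀ n, ⟪S (f n), S (f n)⟫ = (1/4 : ℂ) *
      (⟪S (f n + (1:ℂ) • S (f n)), f n + (1:ℂ) • S (f n)⟫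
        + (-1 : ℂ) * ⟪S (f n + (-1:ℂ) • S (f n)), f n + (-1:ℂ) • S (f n)⟫
        + (-Complex.I) * ⟪S (f n + Complex.I • S (f n)), f n + Complex.I • S (f n)⟫
        + Complex.I * ⟪S (f n + (-Complex.I) • S (f n)), f n + (-Complex.I) • S (f n)⟫) := by
    intro n
    simp only [map_add, map_smul, inner_add_left, inner_add_right, inner_smul_left,
      inner_smul_right, map_neg, map_one, Complex.conj_I]
    ring_nf
    simp [Complex.I_sq]
    ring
  have hd : Tendsto (fun n => ⟪S (f n), S (f n)⟫) atTop (𝓝 0) := by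
    rw [show (0:ℂ) = (1/4 : ℂ) * (0 + (-1:ℂ) * 0 + (-Complex.I) * 0 + Complex.I * 0) by ring]
    simp only [hpol]
    exact (((((hcomb 1).add ((hcomb (-1)).const_mul (-1))).add
      ((hcomb Complex.I).const_mul (-Complex.I))).add
      ((hcomb (-Complex.I)).const_mul Complex.I)).const_mul (1/4 : ℂ))
  -- conclude norm convergence
  have hsq : Tendsto (fun n => ‖S (f n)‖ ^ 2) atTop (𝓝 0) := by
    have := hd.norm
    simp only [inner_self_eq_norm_sq_to_K] at this
    simpa [Complex.norm_real, abs_of_nonneg, sq_abs] using this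
  rw [tendsto_zero_iff_norm_tendsto_zero]
  have h := (Real.continuous_sqrt.tendsto 0).comp hsq
  simp only [Function.comp_def, Real.sqrt_sq (norm_nonneg _), Real.sqrt_zero] at h
  exact h

-- every bounded sequence has a weakly convergent subsequence
lemma aux_weak_subseq (f : ℕ → H) {M : ℝ} (hM0 : 0 ≤ M) (hM : ∀ n, ‖f n‖ ≤ M) :
    ∃ (x : H) (φ : ℕ → ℕ), StrictMono φ ∧
      ∀ g : H, Tendsto (fun k => ⟪f (φ k) - x, g⟫) atTop (𝓝 0) := by
  -- diagonal extraction via compactness of a product of balls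
  set s : Set (ℕ → ℂ) := Set.univ.pi (fun _ => Metric.closedBall (0:ℂ) (M * M)) with hs
  have hscomp : IsCompact s := isCompact_univ_pi (fun _ => isCompact_closedBall _ _)
  have hmem : ∀ n, (fun m => ⟪f m, f n⟫) ∈ s := by
    intro n
    intro m _
    rw [Metric.mem_closedBall, dist_zero_right]
    exact (norm_inner_le_norm _ _).trans (mul_le_mul (hM m) (hM n) (norm_nonneg _) hM0)
  obtain ⟨a, -, φ, hφ, hlim⟩ := hscomp.tendsto_subseq hmem
  rw [tendsto_pi_nhds] at hlim
  -- the set of g for which ⟪f (φ k), g⟫ converges, as a submodule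
  let W : Submodule ℂ H :=
    { carrier := {g | ∃ c : ℂ, Tendsto (fun k => ⟪f (φ k), g⟫) atTop (𝓝 c)}
      add_mem' := by
        rintro g g' ⟨c, hc⟩ ⟨c', hc'⟩
        exact ⟨c + c', by simpa only [inner_add_right] using hc.add hc'⟩
      zero_mem' := ⟨0, by simpa using tendsto_const_nhds⟩
      smul_mem' := by
        rintro r g ⟨c, hc⟩
        exact ⟨r * c, by simpa only [inner_smul_right] using hc.const_mul r⟩ }
  have hWrange : ∀ m, f m ∈ W := by
    intro m
    refine ⟨(starRingEnd ℂ) (a m), ?_⟩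
    have := (Complex.continuous_conj.tendsto (a m)).comp (hlim m)
    simpa only [Function.comp_def, inner_conj_symm] using this
  have hWspan : Submodule.span ℂ (Set.range f) ≤ W :=
    Submodule.span_le.mpr (by rintro - ⟨m, rfl⟩; exact hWrange m)
  -- closure of the span is still contained (Cauchy ε/3 argument)
  have hWclos : ∀ g ∈ closure (Submodule.span ℂ (Set.range f) : Set H), (g : H) ∈ W := by
    intro g hg
    have hcau : CauchySeq (fun k => ⟪f (φ k), g⟫) := by
      rw [Metric.cauchySeq_iff]
      intro ε hε
      obtain ⟨v, hv, hvg⟩ := Metric.mem_closure_iff.mp hg (ε / (3 * (M + 1)))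
        (by positivity)
      obtain ⟨c, hc⟩ := hWspan hv
      have hcv : CauchySeq (fun k => ⟪f (φ k), v⟫) := hc.cauchySeq
      rw [Metric.cauchySeq_iff] at hcv
      obtain ⟨N, hN⟩ := hcv (ε / 3) (by positivity)
      refine ⟨N, fun m hm n hn => ?_⟩
      have key : ∀ k, dist (⟪f (φ k), g⟫) (⟪f (φ k), v⟫) < ε / 3 := by
        intro k
        rw [dist_eq_norm, ← inner_sub_right]
        calc ‖⟪f (φ k), g - v⟫‖ ≤ ‖f (φ k)‖ * ‖g - v‖ := norm_inner_le_norm _ _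
        _ ≤ (M + 1) * ‖g - v‖ := by
            apply mul_le_mul_of_nonneg_right ((hM _).trans (by linarith)) (norm_nonneg _)
        _ < (M + 1) * (ε / (3 * (M + 1))) := by
            apply mul_lt_mul_of_pos_left _ (by linarith)
            rwa [← dist_eq_norm]
        _ = ε / 3 := by field_simp
      calc dist (⟪f (φ m), g⟫) (⟪f (φ n), g⟫)
          ≤ dist (⟪f (φ m), g⟫) (⟪f (φ m), v⟫) + dist (⟪f (φ m), v⟫) (⟪f (φ n), v⟫)
            + dist (⟪f (φ n), v⟫) (⟪f (φ n), g⟫) := dist_triangle4 _ _ _ _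
      _ < ε / 3 + ε / 3 + ε / 3 := by
          have := hN m hm n hn
          have k1 := key m
          have k2 := key n
          rw [dist_comm (⟪f (φ n), v⟫)] at *
          linarith [key m, hN m hm n hn, key n]
      _ = ε := by ring
    obtain ⟨c, hc⟩ := cauchySeq_tendsto_of_complete hcau
    exact ⟨c, hc⟩
  -- every g: orthogonal decomposition
  have hWall : ∀ g : H, ∃ c : ℂ, Tendsto (fun k => ⟪f (φ k), g⟫) atTop (𝓝 c) := by
    intro g
    set V := (Submodule.span ℂ (Set.range f)).topologicalClosure with hV
    obtain ⟨y, hy, z, hz, rfl⟩ := (Submodule.exists_add_mem_mem_orthogonal g : ∃ y ∈ V, ∃ z ∈ Vᗮ, g = y + z)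
    have hy' : (y : H) ∈ W := hWclos y hy
    obtain ⟨c, hc⟩ := hy'
    refine ⟨c, ?_⟩
    have hzero : ∀ k, ⟪f (φ k), z⟫ = 0 := by
      intro k
      have hfk : f (φ k) ∈ V :=
        Submodule.le_topologicalClosure _ (Submodule.subset_span (Set.mem_range_self _))
      exact hz _ hfk
    simp only [inner_add_right, hzero, add_zero]
    exact hc
  -- build the limit functional and apply Riesz
  let Lfun : H → ℂ := fun g => limUnder atTop (fun k => ⟪f (φ k), g⟫)
  have hT : ∀ g : H, Tendsto (fun k => ⟪f (φ k), g⟫) atTop (𝓝 (Lfun g)) := by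
    intro g
    obtain ⟨c, hc⟩ := hWall g
    rwa [show Lfun g = c from hc.limUnder_eq]
  have hadd : ∀ g g', Lfun (g + g') = Lfun g + Lfun g' := by
    intro g g'
    refine tendsto_nhds_unique (hT (g + g')) ?_
    simpa only [inner_add_right] using (hT g).add (hT g')
  have hsmul : ∀ (r : ℂ) g, Lfun (r • g) = r * Lfun g := by
    intro r g
    refine tendsto_nhds_unique (hT (r • g)) ?_
    simpa only [inner_smul_right] using (hT g).const_mul r
  let L : H →L[ℂ] ℂ := LinearMap.mkContinuous
    { toFun := Lfun
      map_add' := hadd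
      map_smul' := hsmul } M (by
        intro g
        refine le_of_tendsto (hT g).norm (Eventually.of_forall fun k => ?_)
        exact (norm_inner_le_norm _ _).trans
          (mul_le_mul_of_nonneg_right (hM _) (norm_nonneg _)))
  set x : H := (InnerProductSpace.toDual ℂ H).symm L with hx
  have hxg : ∀ g, ⟪x, g⟫ = Lfun g := fun g => InnerProductSpace.toDual_symm_apply
  refine ⟨x, φ, hφ, fun g => ?_⟩
  have : Tendsto (fun k => ⟪f (φ k), g⟫ - ⟪x, g⟫) atTop (𝓝 (Lfun g - Lfun g)) := by
    rw [show (fun k => ⟪f (φ k), g⟫ - ⟪x, g⟫) = fun k => ⟪f (φ k), g⟫ - Lfun g by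
      funext k; rw [hxg]]
    exact (hT g).sub tendsto_const_nhds
  simpa only [inner_sub_left, sub_self] using this

end Aux

open Metric Topology Set

/-- A bounded operator `S` on a complex Hilbert space is compact iff
`⟨S fₙ, fₙ⟩ → 0` for every sequence `fₙ ⇀ 0` weakly. -/
theorem stmt2 {H : Type*} [NormedAddCommGroup H] [InnerProductSpace ℂ H] [CompleteSpace H]
    (S : H →L[ℂ] H) :
    IsCompactOperator ⇑S ↔
      ∀ f : ℕ → H, (∀ g : H, Tendsto (fun n => ⟪f n, g⟫) atTop (nhds 0)) →
        Tendsto (fun n => ⟪S (f n), f n⟫) atTop (nhds 0) := by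
  constructor
  · intro hS f hw
    obtain ⟨M, hM0, hM⟩ := aux_bdd f (fun g => ⟨0, hw g⟩)
    have hSf : Tendsto (fun n => S (f n)) atTop (𝓝 0) := aux_fwd S hS f hM hw
    have hnorm : Tendsto (fun n => ‖S (f n)‖ * M) atTop (𝓝 0) := by
      simpa using (tendsto_zero_iff_norm_tendsto_zero.mp hSf).mul_const M
    apply squeeze_zero_norm _ hnorm
    intro n
    exact (norm_inner_le_norm _ _).trans
      (mul_le_mul_of_nonneg_left (hM n) (norm_nonneg _))
  · intro hyp
    have hcomp : IsCompact (closure (⇑S '' Metric.closedBall 0 1)) := by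
      apply IsSeqCompact.isCompact
      intro u hu
      have hv : ∀ n : ℕ, ∃ y : H, ‖y‖ ≤ 1 ∧ dist (u n) (S y) < 1 / (n + 1) := by
        intro n
        obtain ⟨b, hb, hdist⟩ := Metric.mem_closure_iff.mp (hu n) (1 / (n + 1))
          (by positivity)
        obtain ⟨y, hy, rfl⟩ := hb
        exact ⟨y, by simpa [dist_zero_right] using hy, hdist⟩
      choose w hw1 hwd using hv
      obtain ⟨x, φ, hφ, hweak⟩ := aux_weak_subseq w zero_le_one hw1
      have hSn : Tendsto (fun k => S (w (φ k) - x)) atTop (𝓝 0) := aux_pol S hyp _ hweak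
      have hSv : Tendsto (fun k => S (w (φ k))) atTop (𝓝 (S x)) := by
        rw [← tendsto_sub_nhds_zero_iff]
        simpa only [map_sub] using hSn
      have h2 : Tendsto (fun k => u (φ k) - S (w (φ k))) atTop (𝓝 0) := by
        rw [tendsto_zero_iff_norm_tendsto_zero]
        apply squeeze_zero (fun k => norm_nonneg _) (fun k => ?_)
          tendsto_one_div_add_atTop_nhds_zero_nat
        calc ‖u (φ k) - S (w (φ k))‖ = dist (u (φ k)) (S (w (φ k))) :=
              (dist_eq_norm _ _).symm
        _ ≤ 1 / (φ k + 1) := (hwd (φ k)).le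
        _ ≤ 1 / (k + 1) := by
            apply one_div_le_one_div_of_le (by positivity)
            have h3 : (k : ℝ) ≤ (φ k : ℝ) := Nat.cast_le.mpr hφ.le_apply
            linarith
      have huφ : Tendsto (u ∘ φ) atTop (𝓝 (S x)) := by
        have := h2.add hSv
        simpa [Function.comp_def] using this
      refine ⟨S x, ?_, φ, hφ, huφ⟩
      exact mem_closure_of_tendsto hSv (Eventually.of_forall fun k =>
        ⟨w (φ k), by simpa [dist_zero_right] using hw1 (φ k), rfl⟩)
    have := (isCompactOperator_iff_isCompact_closure_image_closedBall (𝕜₁ := ℂ)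
      (S : H →ₗ[ℂ] H) one_pos).mpr (by simpa using hcomp)
    simpa using this
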